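/- Let P be a population protocol, let C, C' be configurations and π ∈ ℕ^T a multiset of transitions such that C' = C + Δ(π). If C is 2|π|-saturated, i.e. C(q) ≥ 2|π| for every state q ∈ Q, then C →σ C' for every finite sequence σ of transitions whose Parikh mapping is π. -/

import Mathlib

/-- A population protocol `(Q, T, L, X, I, O)`: `T` is a finite set of transitions, each a pair
of size-2 multisets over the states `Q`, such that every size-2 multiset is the left-hand side
of some transition; `L` is the leader multiset, `I` the input mapping and `O` the output
mapping. -/
structure PopulationProtocol (Q X : Type) where
  T : Finset (Multiset Q × Multiset Q)
  pre_card : ∀ t ∈ T, Multiset.card t.1 = 2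
  post_card : ∀ t ∈ T, Multiset.card t.2 = 2
  total : ∀ p q : Q, ∃ t ∈ T, t.1 = {p, q}
  L : Multiset Q
  I : X → Q
  O : Q → Bool

namespace PopulationProtocol

variable {Q X : Type} [DecidableEq Q]

/-- A configuration is a multiset of states with at least two elements. -/
def IsConfig (C : Multiset Q) : Prop := 2 ≤ Multiset.card C

/-- One step: some transition `t` enabled at `C` (i.e. `t.1 ≤ C`) fires. -/
def Step (P : PopulationProtocol Q X) (C C' : Multiset Q) : Prop :=
  ∃ t ∈ P.T, t.1 ≤ C ∧ C' = C - t.1 + t.2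

/-- Reachability `C →* C'` via a finite sequence of transitions. -/
def Reach (P : PopulationProtocol Q X) : Multiset Q → Multiset Q → Prop :=
  Relation.ReflTransGen P.Step

/-- Firing a given transition `t`. -/
def StepT (P : PopulationProtocol Q X) (t : Multiset Q × Multiset Q)
    (C C' : Multiset Q) : Prop :=
  t ∈ P.T ∧ t.1 ≤ C ∧ C' = C - t.1 + t.2

/-- `C →σ C'`: successive firing of the transitions in the finite sequence `σ`. -/
def FireSeq (P : PopulationProtocol Q X) :
    List (Multiset Q × Multiset Q) → Multiset Q → Multiset Q → Prop
  | [], C, C' => C' = C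
  | t :: σ, C, C' => ∃ D, P.StepT t C D ∧ P.FireSeq σ D C'

/-- The output of a configuration is `b` if all states populated by it have output `b`. -/
def Output (P : PopulationProtocol Q X) (C : Multiset Q) (b : Bool) : Prop :=
  ∀ q ∈ C, P.O q = b

/-- A configuration is `b`-stable if every configuration reachable from it has output `b`. -/
def Stable (P : PopulationProtocol Q X) (b : Bool) (C : Multiset Q) : Prop :=
  IsConfig C ∧ ∀ C', P.Reach C C' → P.Output C' b

/-- The set `S = S₀ ∪ S₁` of stable configurations. -/
def StableSet (P : PopulationProtocol Q X) (C : Multiset Q) : Prop :=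
  P.Stable false C ∨ P.Stable true C

/-- The initial configuration `IC(v) = L + Σ_x v(x)·I(x)` for an input `v`. -/
def IC [Fintype X] (P : PopulationProtocol Q X) (v : X → ℕ) : Multiset Q :=
  P.L + ∑ x : X, Multiset.replicate (v x) (P.I x)

/-- An execution: an infinite sequence of configurations, each step firing a transition. -/
def IsExecution (P : PopulationProtocol Q X) (σ : ℕ → Multiset Q) : Prop :=
  ∀ i, P.Step (σ i) (σ (i + 1))

/-- Fairness: a configuration reachable from infinitely many `σ i` occurs infinitely often. -/
def Fair (P : PopulationProtocol Q X) (σ : ℕ → Multiset Q) : Prop :=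
  ∀ C : Multiset Q, (∀ N, ∃ i, N ≤ i ∧ P.Reach (σ i) C) → ∀ N, ∃ i, N ≤ i ∧ σ i = C

/-- The output of an execution is `b` if from some index on every configuration has output `b`. -/
def OutputOf (P : PopulationProtocol Q X) (σ : ℕ → Multiset Q) (b : Bool) : Prop :=
  ∃ N, ∀ i, N ≤ i → P.Output (σ i) b

/-- The protocol computes `φ` if for every input `v` (of size at least 2) every fair execution
from `IC(v)` has output `φ(v)`. -/
def Computes [Fintype X] (P : PopulationProtocol Q X) (φ : (X → ℕ) → Bool) : Prop :=
  ∀ v : X → ℕ, 2 ≤ ∑ x : X, v x →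
    ∀ σ : ℕ → Multiset Q, P.IsExecution σ → P.Fair σ → σ 0 = P.IC v → P.OutputOf σ (φ v)

/-- `(B, S)` is a basis element of a set `𝒞` of configurations if `B + ℕ^S ⊆ 𝒞`. -/
def IsBasisElement (𝒞 : Multiset Q → Prop) (B : Multiset Q) (S : Finset Q) : Prop :=
  ∀ D : Multiset Q, (∀ q ∈ D, q ∈ S) → 𝒞 (B + D)

/-- A (finite) basis of a set `𝒞` of configurations: `𝒞 = ⋃_{(B,S)∈ℬ} (B + ℕ^S)`. -/
def IsBasis (𝒞 : Multiset Q → Prop) (ℬ : Finset (Multiset Q × Finset Q)) : Prop :=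
  ∀ C : Multiset Q, 𝒞 C ↔ ∃ p ∈ ℬ, ∃ D : Multiset Q, (∀ q ∈ D, q ∈ p.2) ∧ C = p.1 + D

/-- `‖B‖∞`, the maximal multiplicity of a state in `B`. -/
def normInf [Fintype Q] (B : Multiset Q) : ℕ := Finset.univ.sup fun q => B.count q

/-- The displacement `Δ(t) = p' + q' − p − q ∈ ℤ^Q` of a transition `t = (p,q ↦ p',q')`. -/
def displ (t : Multiset Q × Multiset Q) (q : Q) : ℤ :=
  (Multiset.count q t.2 : ℤ) - (Multiset.count q t.1 : ℤ)

/-- The displacement of a multiset `π` of transitions. -/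
def displM (π : Multiset (Multiset Q × Multiset Q)) (q : Q) : ℤ :=
  (π.map fun t => displ t q).sum

/-- `C' = C + Δ(π)` (as vectors in `ℤ^Q`). -/
def AddDispl (C : Multiset Q) (π : Multiset (Multiset Q × Multiset Q))
    (C' : Multiset Q) : Prop :=
  ∀ q : Q, (Multiset.count q C' : ℤ) = (Multiset.count q C : ℤ) + displM π q

/-- A multiset `π ∈ ℕ^T` of transitions is potentially realisable if `IC(i) + Δ(π) ∈ ℕ^Q`
for some input `i`. (Leaderless, single input variable.) -/
def PotReal (P : PopulationProtocol Q Unit)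
    (π : Multiset (Multiset Q × Multiset Q)) : Prop :=
  (∀ t ∈ π, t ∈ P.T) ∧ ∃ i : ℕ, ∃ C : Multiset Q, AddDispl (P.IC fun _ => i) π C

/-- A configuration is `j`-saturated if every state is populated by at least `j` agents. -/
def Saturated (j : ℕ) (C : Multiset Q) : Prop := ∀ q : Q, j ≤ Multiset.count q C

/-- `C` is `(1/k)`-concentrated in `S`: `k·C(Q∖S) ≤ |C|`. -/
def ConcInv (k : ℕ) (S : Finset Q) (C : Multiset Q) : Prop :=
  k * Multiset.card (C.filter fun q => q ∉ S) ≤ Multiset.card C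

end PopulationProtocol

open PopulationProtocol

private lemma saturated_fire_aux {Q X : Type} [DecidableEq Q] (P : PopulationProtocol Q X) :
    ∀ σ : List (Multiset Q × Multiset Q), ∀ C C' : Multiset Q,
      (∀ t ∈ σ, t ∈ P.T) → AddDispl C (↑σ) C' →
      Saturated (2 * σ.length) C → P.FireSeq σ C C' := by
  intro σ
  induction σ with
  | nil =>
    intro C C' _ h _
    simp only [FireSeq]
    ext q
    have := h q
    simp [displM] at this
    omega
  | cons t σ ih =>
    intro C C' hπ h hsat
    have htT : t ∈ P.T := hπ t List.mem_cons_self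
    have hpre : ∀ q : Q, Multiset.count q t.1 ≤ Multiset.count q C := by
      intro q
      calc Multiset.count q t.1 ≤ Multiset.card t.1 := Multiset.count_le_card _ _
        _ = 2 := P.pre_card t htT
        _ ≤ 2 * (t :: σ).length := by simp
        _ ≤ Multiset.count q C := hsat q
    have hle : t.1 ≤ C := Multiset.le_iff_count.2 hpre
    refine ⟨C - t.1 + t.2, ⟨htT, hle, rfl⟩, ?_⟩
    have hcount : ∀ q : Q, (Multiset.count q (C - t.1 + t.2) : ℤ)
        = (Multiset.count q C : ℤ) + displ t q := by
      intro q
      rw [Multiset.count_add, Multiset.count_sub]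
      push_cast [Nat.cast_sub (hpre q)]
      unfold displ
      ring
    refine ih (C - t.1 + t.2) C' (fun u hu => hπ u (List.mem_cons_of_mem _ hu)) ?_ ?_
    · intro q
      have hq := h q
      have hcoe : ((↑(t :: σ) : Multiset (Multiset Q × Multiset Q)))
          = t ::ₘ (↑σ : Multiset (Multiset Q × Multiset Q)) := rfl
      rw [hcoe] at hq
      simp only [displM, Multiset.map_cons, Multiset.sum_cons] at hq
      rw [hcount q, hq]
      unfold displM
      ring
    · intro q
      have h1 := hsat q
      have h2 := hcount q
      have h3 : (t :: σ).length = σ.length + 1 := rfl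
      have hd : -2 ≤ displ t q := by
        unfold displ
        have : Multiset.count q t.1 ≤ 2 := by
          calc Multiset.count q t.1 ≤ Multiset.card t.1 := Multiset.count_le_card _ _
            _ = 2 := P.pre_card t htT
        omega
      omega

/-- if `C' = C + Δ(π)` for `π ∈ ℕ^T` and `C` is `2|π|`-saturated, then
`C →σ C'` for every sequence `σ` with Parikh mapping `π`. -/
theorem saturated_fire {Q X : Type} [DecidableEq Q] (P : PopulationProtocol Q X)
    (C C' : Multiset Q) (π : Multiset (Multiset Q × Multiset Q))
    (hπ : ∀ t ∈ π, t ∈ P.T) (h : AddDispl C π C')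
    (hsat : Saturated (2 * Multiset.card π) C) :
    ∀ σ : List (Multiset Q × Multiset Q),
      (↑σ : Multiset (Multiset Q × Multiset Q)) = π → P.FireSeq σ C C' := by
  intro σ hσ
  subst hσ
  exact saturated_fire_aux P σ C C' (fun t ht => hπ t (by exact_mod_cast ht)) h
    (by simpa using hsat)
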